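/- Let (X,f) be a dynamical system with the shadowing property. If there exists a point x that is non-wandering but not recurrent (i.e., x ∈ Ω(f) \ R(f)), then (X,f) has positive topological entropy. -/

import Mathlib

open Set Function

variable {X : Type*}

/-- A `δ`-pseudo-orbit of `f`. -/
def IsPseudoOrbit [MetricSpace X] (f : X → X) (δ : ℝ) (x : ℕ → X) : Prop :=
  ∀ n : ℕ, dist (f (x n)) (x (n + 1)) < δ

/-- `z` ε-traces the sequence `x`. -/
def Traces [MetricSpace X] (f : X → X) (ε : ℝ) (z : X) (x : ℕ → X) : Prop :=
  ∀ n : ℕ, dist (f^[n] z) (x n) < ε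

/-- The shadowing property. -/
def HasShadowing [MetricSpace X] (f : X → X) : Prop :=
  ∀ ε > (0 : ℝ), ∃ δ > (0 : ℝ), ∀ x : ℕ → X, IsPseudoOrbit f δ x → ∃ z : X, Traces f ε z x

/-- The shadowing property of the restriction of `f` to an invariant set `S`. -/
def HasShadowingOn [MetricSpace X] (f : X → X) (S : Set X) : Prop :=
  ∀ ε > (0 : ℝ), ∃ δ > (0 : ℝ), ∀ x : ℕ → X, (∀ n, x n ∈ S) → IsPseudoOrbit f δ x →
    ∃ z ∈ S, Traces f ε z x

/-- Non-wandering point. -/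
def NonWanderingPt [TopologicalSpace X] (f : X → X) (x : X) : Prop :=
  ∀ U ∈ nhds x, ∃ k : ℕ, 1 ≤ k ∧ ∃ y ∈ U, f^[k] y ∈ U

/-- The (forward) orbit of a point. -/
def orbitSet (f : X → X) (x : X) : Set X := Set.range fun n : ℕ => f^[n] x

/-- Recurrent point. -/
def RecurrentPt [TopologicalSpace X] (f : X → X) (x : X) : Prop :=
  ∀ U ∈ nhds x, ∃ k : ℕ, 1 ≤ k ∧ f^[k] x ∈ U

/-- Minimal point: every point of the orbit closure has `x` in its own orbit closure,
i.e. the orbit closure of `x` is a minimal set. -/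
def MinimalPt [TopologicalSpace X] (f : X → X) (x : X) : Prop :=
  ∀ y ∈ closure (orbitSet f x), x ∈ closure (orbitSet f y)

/-- Regularly recurrent point. -/
def RegRecPt [TopologicalSpace X] (f : X → X) (x : X) : Prop :=
  ∀ U ∈ nhds x, ∃ k : ℕ, 1 ≤ k ∧ ∀ n : ℕ, f^[k * n] x ∈ U

/-- Equicontinuity of the family of iterates of `f`. -/
def EquicontinuousMap [MetricSpace X] (f : X → X) : Prop :=
  ∀ ε > (0 : ℝ), ∃ δ > (0 : ℝ), ∀ x y : X, dist x y < δ →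
    ∀ n : ℕ, dist (f^[n] x) (f^[n] y) < ε

/-- `u` is a sensitive point of the subsystem on `S`. -/
def SensitivePtOn [MetricSpace X] (f : X → X) (S : Set X) (u : X) : Prop :=
  ∃ δ > (0 : ℝ), ∀ U ∈ nhds u, ∃ n : ℕ, ∃ a ∈ U ∩ S, ∃ b ∈ U ∩ S,
    dist (f^[n] a) (f^[n] b) > δ

/-- `u` is a sensitive point of `(X,f)`. -/
def SensitivePt [MetricSpace X] (f : X → X) (u : X) : Prop :=
  ∃ δ > (0 : ℝ), ∀ U ∈ nhds u, ∃ n : ℕ, ∃ a ∈ U, ∃ b ∈ U,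
    dist (f^[n] a) (f^[n] b) > δ

/-- Topological transitivity. -/
def TopTransitive {Y : Type*} [TopologicalSpace Y] (g : Y → Y) : Prop :=
  ∀ U V : Set Y, IsOpen U → U.Nonempty → IsOpen V → V.Nonempty →
    ∃ n : ℕ, 1 ≤ n ∧ (g^[n] '' U ∩ V).Nonempty

/-- Weak mixing: the product system is transitive. -/
def WeaklyMixing [TopologicalSpace X] (f : X → X) : Prop :=
  TopTransitive (fun p : X × X => (f p.1, f p.2))

/-- Strong mixing. -/
def StronglyMixing {Y : Type*} [TopologicalSpace Y] (g : Y → Y) : Prop :=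
  ∀ U V : Set Y, IsOpen U → U.Nonempty → IsOpen V → V.Nonempty →
    ∃ N : ℕ, ∀ n ≥ N, (g^[n] '' U ∩ V).Nonempty

/-- The shift map on the full shift over `d` symbols. -/
def shiftMap (d : ℕ) : (ℕ → Fin d) → (ℕ → Fin d) := fun x n => x (n + 1)

/-- `π` is a factor map from the subsystem `(Y, f^[m])` onto the full shift on `d` symbols. -/
def FactorOntoShift [TopologicalSpace X] (f : X → X) (m : ℕ) (Y : Set X) (d : ℕ)
    (π : X → (ℕ → Fin d)) : Prop :=
  ContinuousOn π Y ∧ π '' Y = Set.univ ∧ ∀ y ∈ Y, π (f^[m] y) = shiftMap d (π y)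

namespace NWAux

/-! ### Concatenation of blocks indexed by a boolean sequence -/

/-- Starting time of the `i`-th block. -/
def chainT (len : Bool → ℕ) (s : ℕ → Bool) : ℕ → ℕ
  | 0 => 0
  | i + 1 => chainT len s i + len (s i)

/-- Index of the block containing time `n`. -/
def chainIdx (len : Bool → ℕ) (s : ℕ → Bool) (n : ℕ) : ℕ :=
  Nat.findGreatest (fun i => chainT len s i ≤ n) n

/-- The concatenated sequence. -/
def chainSeq (blk : Bool → ℕ → X) (len : Bool → ℕ) (s : ℕ → Bool) (n : ℕ) : X :=
  blk (s (chainIdx len s n)) (n - chainT len s (chainIdx len s n))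

variable {len : Bool → ℕ} {s s' : ℕ → Bool}

lemma le_chainT (hlen : ∀ b, 1 ≤ len b) (i : ℕ) : i ≤ chainT len s i := by
  induction i with
  | zero => exact le_refl 0
  | succ i ih =>
      have h2 := hlen (s i)
      simp only [chainT]; omega

lemma chainT_mono {i j : ℕ} (hij : i ≤ j) : chainT len s i ≤ chainT len s j := by
  induction j with
  | zero =>
      have : i = 0 := by omega
      subst this; exact le_rfl
  | succ j ih =>
      rcases Nat.lt_or_ge i (j + 1) with h | h
      · have h2 := ih (by omega)
        simp only [chainT]; omega
      · have : i = j + 1 := by omega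
        subst this; exact le_rfl

lemma chainT_spec (n : ℕ) : chainT len s (chainIdx len s n) ≤ n :=
  Nat.findGreatest_spec (P := fun i => chainT len s i ≤ n) (Nat.zero_le n)
    (by simp [chainT])

lemma lt_chainT_succ (hlen : ∀ b, 1 ≤ len b) (n : ℕ) :
    n < chainT len s (chainIdx len s n + 1) := by
  by_contra hc
  push_neg at hc
  have h3 : chainIdx len s n + 1 ≤ n := (le_chainT hlen _).trans hc
  have h4 := Nat.le_findGreatest (P := fun i => chainT len s i ≤ n) h3 hc
  exact Nat.not_succ_le_self _ h4

lemma chainIdx_eq {i n : ℕ} (h1 : chainT len s i ≤ n) (h2 : n < chainT len s (i + 1))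
    (hlen : ∀ b, 1 ≤ len b) : chainIdx len s n = i := by
  have hin : i ≤ n := (le_chainT hlen i).trans h1
  apply le_antisymm
  · by_contra hc
    push_neg at hc
    have h3 : chainT len s (i + 1) ≤ chainT len s (chainIdx len s n) := chainT_mono hc
    have h4 := chainT_spec (len := len) (s := s) n
    omega
  · exact Nat.le_findGreatest hin h1

lemma chainSeq_eval {blk : Bool → ℕ → X} {i t : ℕ} (hlen : ∀ b, 1 ≤ len b)
    (ht : t < len (s i)) :
    chainSeq blk len s (chainT len s i + t) = blk (s i) t := by
  have hidx : chainIdx len s (chainT len s i + t) = i :=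
    chainIdx_eq (Nat.le_add_right _ _) (by simp only [chainT]; omega) hlen
  simp [chainSeq, hidx]

lemma chainSeq_decomp (hlen : ∀ b, 1 ≤ len b) (n : ℕ) :
    ∃ i t, t < len (s i) ∧ n = chainT len s i + t := by
  have h1 := chainT_spec (len := len) (s := s) n
  have h2 := lt_chainT_succ (len := len) (s := s) hlen n
  refine ⟨chainIdx len s n, n - chainT len s (chainIdx len s n), ?_, by omega⟩
  simp only [chainT] at h2
  omega

lemma chainT_congr (h : ∀ j < i, s j = s' j) : chainT len s i = chainT len s' i := by
  induction i with
  | zero => rfl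
  | succ i ih =>
      simp only [chainT]
      rw [ih (fun j hj => h j (by omega)), h i (by omega)]

lemma chainT_le_mul {M : ℕ} (hM : ∀ b, len b ≤ M) (i : ℕ) : chainT len s i ≤ i * M := by
  induction i with
  | zero => simp [chainT]
  | succ i ih =>
      have := hM (s i)
      simp only [chainT, Nat.succ_mul]
      omega

lemma chainSeq_pseudo [MetricSpace X] {f : X → X} {δ : ℝ} {blk : Bool → ℕ → X} {x : X}
    (hlen : ∀ b, 1 ≤ len b)
    (hstart : ∀ b, blk b 0 = x)
    (hin : ∀ b t, t + 1 < len b → dist (f (blk b t)) (blk b (t + 1)) < δ)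
    (hend : ∀ b, dist (f (blk b (len b - 1))) x < δ)
    (s : ℕ → Bool) : IsPseudoOrbit f δ (chainSeq blk len s) := by
  intro n
  obtain ⟨i, t, ht, hn⟩ := chainSeq_decomp (s := s) hlen n
  subst hn
  by_cases hcase : t + 1 < len (s i)
  · rw [chainSeq_eval hlen ht, show chainT len s i + t + 1 = chainT len s i + (t + 1) by omega,
      chainSeq_eval hlen hcase]
    exact hin _ _ hcase
  · have htop : t + 1 = len (s i) := by omega
    have h1 : chainT len s i + t + 1 = chainT len s (i + 1) + 0 := by
      simp only [chainT]; omega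
    rw [chainSeq_eval hlen ht, h1, chainSeq_eval hlen (hlen (s (i + 1))), hstart]
    have := hend (s i)
    rwa [show len (s i) - 1 = t by omega] at this

/-! ### Continuity of iterates and chains from the non-wandering point -/

lemma iterate_cont [MetricSpace X] {f : X → X} (hf : Continuous f) (x : X) (N : ℕ) {γ : ℝ}
    (hγ : 0 < γ) :
    ∃ η > 0, ∀ y, dist y x < η → ∀ j ≤ N, dist (f^[j] y) (f^[j] x) < γ := by
  induction N with
  | zero =>
      exact ⟨γ, hγ, fun y hy j hj => by
        interval_cases j
        simpa using hy⟩
  | succ N ih =>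
      obtain ⟨η, hη, hη2⟩ := ih
      have hC : ContinuousAt (f^[N + 1]) x := (hf.iterate (N + 1)).continuousAt
      rw [Metric.continuousAt_iff] at hC
      obtain ⟨η', hη', hC'⟩ := hC γ hγ
      refine ⟨min η η', lt_min hη hη', fun y hy j hj => ?_⟩
      rcases Nat.lt_or_ge j (N + 1) with hlt | hge
      · exact hη2 y (hy.trans_le (min_le_left _ _)) j (by omega)
      · have hj' : j = N + 1 := by omega
        subst hj'
        exact hC' (hy.trans_le (min_le_right _ _))

lemma chain_exists [MetricSpace X] {f : X → X} (hf : Continuous f) {x : X}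
    (hnw : NonWanderingPt f x) {ε₀ : ℝ} (hε₀ : 0 < ε₀)
    (hesc : ∀ k, 1 ≤ k → ε₀ ≤ dist (f^[k] x) x)
    {γ : ℝ} (hγ : 0 < γ) (i : ℕ) :
    ∃ L, 2 ≤ L ∧ ∃ p : ℕ → X, p 0 = f^[i] x ∧ (∀ t, L ≤ t → p t = x) ∧
      ∀ t < L, dist (f (p t)) (p (t + 1)) < γ := by
  obtain ⟨η, hη, hη2⟩ := iterate_cont hf x (i + 1) (lt_min hγ (by linarith : (0:ℝ) < ε₀ / 2))
  set η' := min η (min γ (ε₀ / 2)) with hη'def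
  have hη'pos : 0 < η' := lt_min hη (lt_min hγ (by linarith))
  obtain ⟨k, hk1, y, hy, hky⟩ := hnw (Metric.ball x η') (Metric.ball_mem_nhds x hη'pos)
  rw [Metric.mem_ball] at hy hky
  have hyx : dist y x < η := hy.trans_le (min_le_left _ _)
  have hη'ε : η' ≤ ε₀ / 2 := (min_le_right _ _).trans (min_le_right _ _)
  have hη'γ : η' ≤ γ := (min_le_right _ _).trans (min_le_left _ _)
  have hk : i + 2 ≤ k := by
    by_contra hc
    push_neg at hc
    have h1 : dist (f^[k] y) (f^[k] x) < ε₀ / 2 :=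
      (hη2 y hyx k (by omega)).trans_le (min_le_right _ _)
    have h2 : dist (f^[k] y) x < ε₀ / 2 := hky.trans_le hη'ε
    have h3 := hesc k hk1
    have h4 := dist_triangle (f^[k] x) (f^[k] y) x
    have h5 := dist_comm (f^[k] x) (f^[k] y)
    linarith
  have hpts : ∀ t, 0 < t → t < k - i →
      (if t = 0 then f^[i] x else if t < k - i then f^[i + t] y else x) = f^[i + t] y := by
    intro t h1 h2
    rw [if_neg (by omega), if_pos h2]
  refine ⟨k - i, by omega,
    fun t => if t = 0 then f^[i] x else if t < k - i then f^[i + t] y else x,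
    by simp, ?_, ?_⟩
  · intro t ht
    simp only [if_neg (show ¬ t = 0 by omega), if_neg (show ¬ t < k - i by omega)]
  intro t ht
  have hb : ∀ u : ℕ,
      (fun t => if t = 0 then f^[i] x else if t < k - i then f^[i + t] y else x) u
        = if u = 0 then f^[i] x else if u < k - i then f^[i + u] y else x := fun u => rfl
  rw [hb, hb]
  rcases Nat.eq_zero_or_pos t with rfl | htpos
  · simp only [Nat.zero_add]
    rw [if_pos trivial, hpts 1 one_pos (by omega)]
    rw [← Function.iterate_succ_apply' f i x]
    have h6 := hη2 y hyx (i + 1) le_rfl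
    rw [dist_comm] at h6
    exact h6.trans_le (min_le_left _ _)
  · rw [hpts t htpos ht]
    rcases Nat.lt_or_ge (t + 1) (k - i) with hlt | hge
    · rw [hpts (t + 1) (by omega) hlt]
      have he : i + (t + 1) = (i + t) + 1 := by omega
      rw [he, Function.iterate_succ_apply' f (i + t) y]
      simpa using hγ
    · have ht1 : t + 1 = k - i := by omega
      rw [if_neg (by omega : ¬ t + 1 = 0), if_neg (by omega : ¬ t + 1 < k - i)]
      rw [← Function.iterate_succ_apply' f (i + t) y]
      have he : f^[(i + t) + 1] y = f^[k] y := by congr 1; omega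
      rw [he]
      exact hky.trans_le hη'γ

end NWAux

open NWAux in
theorem nonwandering_nonrecurrent_implies_positive_entropy [MetricSpace X] [CompactSpace X]
    (f : X → X) (hf : Continuous f) (hsh : HasShadowing f)
    (h : ∃ x : X, NonWanderingPt f x ∧ ¬ RecurrentPt f x) :
    0 < Dynamics.coverEntropy f Set.univ := by
  classical
  obtain ⟨x, hnw, hnr⟩ := h
  unfold RecurrentPt at hnr
  push_neg at hnr
  obtain ⟨U0, hU0, hU0'⟩ := hnr
  obtain ⟨ε₀, hε₀, hball⟩ := Metric.mem_nhds_iff.1 hU0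
  have hesc : ∀ k, 1 ≤ k → ε₀ ≤ dist (f^[k] x) x := by
    intro k hk
    by_contra hlt
    push_neg at hlt
    exact hU0' k hk (hball (Metric.mem_ball.2 hlt))
  have hε4 : (0:ℝ) < ε₀ / 4 := by linarith
  obtain ⟨δ, hδ, htrace⟩ := hsh (ε₀ / 4) hε4
  obtain ⟨m, hm2, c, hc0, hcL, hcchain⟩ := chain_exists hf hnw hε₀ hesc hδ 0
  obtain ⟨L, hL2, p, hp0, hpL, hpchain⟩ := chain_exists hf hnw hε₀ hesc hδ m
  set len : Bool → ℕ := fun b => if b then m + L else m with hlendef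
  set blk : Bool → ℕ → X :=
    fun b t => if b then (if t ≤ m then f^[t] x else p (t - m)) else c t with hblkdef
  have hlenf : len false = m := rfl
  have hlent : len true = m + L := rfl
  have hblkf : ∀ t, blk false t = c t := fun t => rfl
  have hblkt : ∀ t, blk true t = if t ≤ m then f^[t] x else p (t - m) := fun t => rfl
  have hlen : ∀ b, 1 ≤ len b := by
    intro b; cases b
    · rw [hlenf]; omega
    · rw [hlent]; omega
  have hstart : ∀ b, blk b 0 = x := by
    intro b; cases b
    · rw [hblkf]; simpa using hc0
    · rw [hblkt]; simp
  have hin : ∀ b t, t + 1 < len b → dist (f (blk b t)) (blk b (t + 1)) < δ := by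
    intro b t htl
    cases b
    · rw [hlenf] at htl
      rw [hblkf, hblkf]
      exact hcchain t (by omega)
    · rw [hlent] at htl
      rw [hblkt, hblkt]
      rcases lt_trichotomy t m with hlt | heq | hgt
      · rw [if_pos (by omega : t ≤ m), if_pos (by omega : t + 1 ≤ m),
          ← Function.iterate_succ_apply' f t x]
        simpa using hδ
      · subst heq
        rw [if_pos le_rfl, if_neg (by omega : ¬ t + 1 ≤ t), show t + 1 - t = 1 by omega, ← hp0]
        exact hpchain 0 (by omega)
      · rw [if_neg (by omega : ¬ t ≤ m), if_neg (by omega : ¬ t + 1 ≤ m),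
          show t + 1 - m = (t - m) + 1 by omega]
        exact hpchain (t - m) (by omega)
  have hend : ∀ b, dist (f (blk b (len b - 1))) x < δ := by
    intro b; cases b
    · rw [hlenf, hblkf]
      have h1 := hcchain (m - 1) (by omega)
      rwa [show m - 1 + 1 = m by omega, hcL m le_rfl] at h1
    · rw [hlent, hblkt, if_neg (by omega : ¬ m + L - 1 ≤ m), show m + L - 1 - m = L - 1 by omega]
      have h1 := hpchain (L - 1) (by omega)
      rwa [show L - 1 + 1 = L by omega, hpL L le_rfl] at h1
  have hpseudo : ∀ s : ℕ → Bool, IsPseudoOrbit f δ (chainSeq blk len s) :=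
    chainSeq_pseudo hlen hstart hin hend
  choose z hz using fun s : ℕ → Bool => htrace _ (hpseudo s)
  -- the separation estimate
  have hsep : ∀ v w : ℕ → Bool, ∀ i : ℕ, (∀ j < i, v j = w j) → v i = true → w i = false →
      ε₀ / 2 < dist (f^[chainT len v i + m] (z v)) (f^[chainT len v i + m] (z w)) := by
    intro v w i hpre hvi hwi
    have hTw : chainT len v i = chainT len w i := chainT_congr hpre
    have hv : chainSeq blk len v (chainT len v i + m) = f^[m] x := by
      have h1 : m < len (v i) := by rw [hvi, hlent]; omega
      rw [chainSeq_eval hlen h1, hvi, hblkt, if_pos le_rfl]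
    have hw : chainSeq blk len w (chainT len v i + m) = x := by
      have h1 : chainT len v i + m = chainT len w (i + 1) + 0 := by
        simp only [chainT]
        rw [hTw, hwi, hlenf]
        omega
      rw [h1, chainSeq_eval hlen (hlen (w (i + 1)))]
      exact hstart _
    have d1 := hz v (chainT len v i + m)
    have d2 := hz w (chainT len v i + m)
    rw [hv] at d1
    rw [hw] at d2
    have h3 := hesc m (by omega)
    have htri := dist_triangle4 (f^[m] x) (f^[chainT len v i + m] (z v))
      (f^[chainT len v i + m] (z w)) x
    have hcomm := dist_comm (f^[chainT len v i + m] (z v)) (f^[m] x)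
    linarith
  set Uent : Set (X × X) := {q : X × X | dist q.1 q.2 < ε₀ / 4} with hUdef
  have hUuni : Uent ∈ uniformity X := Metric.dist_mem_uniformity hε4
  set M := m + L with hMdef
  have hMle : ∀ b, len b ≤ M := by
    intro b; cases b
    · rw [hlenf]; omega
    · rw [hlent]
  have hMpos : 0 < M := by omega
  -- exponentially many separated points
  have hcard : ∀ n : ℕ, (2 ^ (n / M) : ℕ∞) ≤ Dynamics.netMaxcard f Set.univ Uent n := by
    intro n
    set k := n / M with hkdef
    set sv : (Fin k → Bool) → ℕ → Bool :=
      fun v j => if hj : j < k then v ⟨j, hj⟩ else false with hsvdef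
    have hsep2 : ∀ v w : Fin k → Bool, v ≠ w → ∃ T < n,
        ε₀ / 2 < dist (f^[T] (z (sv v))) (f^[T] (z (sv w))) := by
      intro v w hvw
      have hex : ∃ j, sv v j ≠ sv w j := by
        obtain ⟨a, ha⟩ := Function.ne_iff.1 hvw
        refine ⟨a.1, ?_⟩
        simp only [hsvdef, dif_pos a.isLt, Fin.eta]
        exact ha
      set i₀ := Nat.find hex with hi₀
      have hne := Nat.find_spec hex
      have hpre : ∀ j < i₀, sv v j = sv w j := fun j hj => not_not.1 (Nat.find_min hex hj)
      have hik : i₀ < k := by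
        by_contra hge
        push_neg at hge
        apply hne
        simp only [hsvdef, dif_neg (show ¬ Nat.find hex < k by rw [← hi₀]; omega)]
      have hk1 : 1 ≤ k := by omega
      have hTbound : ∀ s : ℕ → Bool, chainT len s i₀ + m < n := by
        intro s
        have h1 : chainT len s i₀ ≤ i₀ * M := chainT_le_mul hMle i₀
        have h2 : i₀ * M ≤ (k - 1) * M := Nat.mul_le_mul_right M (by omega)
        have h3 : (k - 1) * M + M = k * M := by
          have : k - 1 + 1 = k := by omega
          calc (k - 1) * M + M = (k - 1 + 1) * M := by ring
          _ = k * M := by rw [this]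
        have h4 : k * M ≤ n := by
          rw [hkdef]
          exact Nat.div_mul_le_self n M
        have hmM : m < M := by omega
        omega
      rcases Bool.eq_false_or_eq_true (sv v i₀) with hvi | hvi
      · have hwi : sv w i₀ = false := by
          cases hwj : sv w i₀
          · rfl
          · exact absurd (hvi.trans hwj.symm) hne
        exact ⟨chainT len (sv v) i₀ + m, hTbound _, hsep (sv v) (sv w) i₀ hpre hvi hwi⟩
      · have hwi : sv w i₀ = true := by
          cases hwj : sv w i₀
          · exact absurd (hvi.trans hwj.symm) hne
          · rfl
        refine ⟨chainT len (sv w) i₀ + m, hTbound _, ?_⟩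
        have hd := hsep (sv w) (sv v) i₀ (fun j hj => (hpre j hj).symm) hwi hvi
        rw [dist_comm] at hd
        exact hd
    have hinj : Function.Injective (fun v : Fin k → Bool => z (sv v)) := by
      intro v w hzz
      by_contra hvw
      obtain ⟨T, _, hTd⟩ := hsep2 v w hvw
      simp only at hzz
      rw [hzz, dist_self] at hTd
      linarith
    have hnet : Dynamics.IsDynNetIn f Set.univ Uent n
        (((Finset.univ : Finset (Fin k → Bool)).image fun v => z (sv v)) : Set X) := by
      constructor
      · exact fun _ _ => Set.mem_univ _
      · intro a ha b hb hab
        simp only [Finset.coe_image, Set.mem_image, Finset.mem_coe, Finset.mem_univ,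
          true_and] at ha hb
        obtain ⟨v, rfl⟩ := ha
        obtain ⟨w, rfl⟩ := hb
        have hvw : v ≠ w := fun hh => hab (by rw [hh])
        obtain ⟨T, hT, hTd⟩ := hsep2 v w hvw
        simp only [Function.onFun]
        rw [Set.disjoint_left]
        intro u hu1 hu2
        rw [Dynamics.mem_ball_dynEntourage] at hu1 hu2
        have g1 := hu1 T hT
        have g2 := hu2 T hT
        rw [UniformSpace.ball, Set.mem_preimage] at g1 g2
        simp only [hUdef, Set.mem_setOf_eq] at g1 g2
        have htri := dist_triangle (f^[T] (z (sv v))) (f^[T] u) (f^[T] (z (sv w)))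
        rw [dist_comm (f^[T] u) (f^[T] (z (sv w)))] at htri
        linarith
    have hcardim : (((Finset.univ : Finset (Fin k → Bool)).image
        fun v => z (sv v))).card = 2 ^ k := by
      rw [Finset.card_image_of_injective _ hinj, Finset.card_univ, Fintype.card_fun,
        Fintype.card_bool, Fintype.card_fin]
    have hle := hnet.card_le_netMaxcard
    rw [hcardim] at hle
    exact_mod_cast hle
  -- conclude positivity of entropy
  have hkey : ((Real.log 2 / M : ℝ) : EReal) ≤ Dynamics.coverEntropy f Set.univ := by
    refine le_trans ?_ (Dynamics.netEntropyEntourage_le_coverEntropy f Set.univ hUuni)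
    apply Filter.le_limsup_of_frequently_le'
    rw [Filter.frequently_atTop]
    intro N
    set K := max N 1 with hKdef
    have hK1 : 1 ≤ K := le_max_right N 1
    refine ⟨M * K, le_trans (le_max_left N 1) (Nat.le_mul_of_pos_left _ hMpos), ?_⟩
    have hkk : (M * K) / M = K := Nat.mul_div_cancel_left K hMpos
    have h1 : ((2 : ℕ∞) ^ K) ≤ Dynamics.netMaxcard f Set.univ Uent (M * K) := by
      have := hcard (M * K)
      rwa [hkk] at this
    have h2 : ENNReal.log ((2 : ENNReal) ^ K)
        ≤ ENNReal.log ((Dynamics.netMaxcard f Set.univ Uent (M * K) : ℕ∞) : ENNReal) := by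
      apply ENNReal.log_monotone
      have := ENat.toENNReal_le.2 h1
      rwa [ENat.toENNReal_pow] at this
    have h3 : ENNReal.log ((2 : ENNReal) ^ K) = (K : EReal) * ((Real.log 2 : ℝ) : EReal) := by
      rw [ENNReal.log_pow]
      congr 1
      rw [show (2 : ENNReal) = ENNReal.ofReal 2 by norm_num,
        ENNReal.log_ofReal_of_pos (by norm_num)]
    have h4 := EReal.monotone_div_right_of_nonneg
      (Nat.cast_nonneg' (α := EReal) (M * K)) h2
    refine le_trans (le_of_eq ?_) h4
    beta_reduce
    rw [h3, ← EReal.coe_coe_eq_natCast K, ← EReal.coe_coe_eq_natCast (M * K),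
      ← EReal.coe_mul, ← EReal.coe_div]
    congr 1
    have hM0 : (M : ℝ) ≠ 0 := Nat.cast_ne_zero.2 hMpos.ne'
    have hK0 : (K : ℝ) ≠ 0 := Nat.cast_ne_zero.2 (by omega)
    rw [Nat.cast_mul]
    field_simp
  refine lt_of_lt_of_le ?_ hkey
  exact EReal.coe_pos.2 (div_pos (Real.log_pos one_lt_two) (Nat.cast_pos.2 hMpos))
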